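/- Let r₁, r₂, r₃, k₁, k₂, k₃, m₂₁, m₂₃ > 0 with r₁ > m₂₁ and r₃ > m₂₃. Define P₁* = (k₁/r₁)(r₁ − m₂₁), P₃* = (k₃/r₃)(r₃ − m₂₃), and P₂* = (k₂/(2r₂))[r₂ + sqrt(r₂² + (4/k₂)r₂(m₂₁P₁* + m₂₃P₃*))]. Then P₁*, P₂*, P₃* > 0 and they satisfy r₁P₁*(1 − P₁*/k₁) − m₂₁P₁* = 0, r₂P₂*(1 − P₂*/k₂) + m₂₁P₁* + m₂₃P₃* = 0, r₃P₃*(1 − P₃*/k₃) − m₂₃P₃* = 0. -/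

import Mathlib

/-- The explicit triple is a strictly positive coexistence equilibrium of
model (n2) (`P₁ → P₂ ← P₃`) under the feasibility conditions
`r₁ > m₂₁` and `r₃ > m₂₃`. -/
theorem modeln2_coexistence_equilibrium
    (r₁ r₂ r₃ k₁ k₂ k₃ m₂₁ m₂₃ : ℝ)
    (hr₁ : 0 < r₁) (hr₂ : 0 < r₂) (hr₃ : 0 < r₃)
    (hk₁ : 0 < k₁) (hk₂ : 0 < k₂) (hk₃ : 0 < k₃)
    (hm₂₁ : 0 < m₂₁) (hm₂₃ : 0 < m₂₃)
    (hf₁ : m₂₁ < r₁) (hf₃ : m₂₃ < r₃)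
    (P₁ P₂ P₃ : ℝ)
    (hP₁ : P₁ = (k₁ / r₁) * (r₁ - m₂₁))
    (hP₃ : P₃ = (k₃ / r₃) * (r₃ - m₂₃))
    (hP₂ : P₂ = (k₂ / (2 * r₂)) *
      (r₂ + Real.sqrt (r₂ ^ 2 + (4 / k₂) * r₂ * (m₂₁ * P₁ + m₂₃ * P₃)))) :
    0 < P₁ ∧ 0 < P₂ ∧ 0 < P₃ ∧
    r₁ * P₁ * (1 - P₁ / k₁) - m₂₁ * P₁ = 0 ∧
    r₂ * P₂ * (1 - P₂ / k₂) + m₂₁ * P₁ + m₂₃ * P₃ = 0 ∧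
    r₃ * P₃ * (1 - P₃ / k₃) - m₂₃ * P₃ = 0 := by
  have hP₁pos : 0 < P₁ := by
    rw [hP₁]
    have h := sub_pos.mpr hf₁
    positivity
  have hP₃pos : 0 < P₃ := by
    rw [hP₃]
    have h := sub_pos.mpr hf₃
    positivity
  have hDpos : 0 < r₂ ^ 2 + (4 / k₂) * r₂ * (m₂₁ * P₁ + m₂₃ * P₃) := by
    positivity
  set s := Real.sqrt (r₂ ^ 2 + (4 / k₂) * r₂ * (m₂₁ * P₁ + m₂₃ * P₃)) with hs
  have hspos : 0 < s := Real.sqrt_pos.mpr hDpos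
  have hs2 : s ^ 2 = r₂ ^ 2 + (4 / k₂) * r₂ * (m₂₁ * P₁ + m₂₃ * P₃) :=
    Real.sq_sqrt hDpos.le
  have hP₂pos : 0 < P₂ := by
    rw [hP₂]; positivity
  refine ⟨hP₁pos, hP₂pos, hP₃pos, ?_, ?_, ?_⟩
  · rw [hP₁]; field_simp; ring
  · rw [hP₂]; field_simp
    have hinv : k₂ * k₂⁻¹ = 1 := mul_inv_cancel₀ hk₂.ne'
    linear_combination (-k₂) * hs2 - (4*r₂*(m₂₁*P₁+m₂₃*P₃)) * hinv
  · rw [hP₃]; field_simp; ring
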